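/- Let G be a finite group of diagonal linear automorphisms of ℂⁿ (each g ∈ G acts by (x₁,…,x_n) ↦ (χ₁(g)x₁,…,χ_n(g)x_n) for characters χᵢ : G → ℂ*). Let f ∈ ℂ[x₁,…,x_n] be a squarefree (reduced) polynomial. Then the following are equivalent: (1) for all P ∈ ℂⁿ and g ∈ G, f(P) = 0 implies f(g·P) = 0; (2) there is a character χ : G → ℂ* such that f(g·x) = χ(g)f(x) for all g ∈ G; (3) there exists k ≥ 1 such that f^k is G-invariant, i.e. f^k(g·x) = f^k(x) for all g ∈ G. -/

import Mathlib

open MvPolynomial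

private lemma evalS {n : ℕ} (cv : Fin n → ℂ) (p : MvPolynomial (Fin n) ℂ) (x : Fin n → ℂ) :
    eval x (bind₁ (fun i => C (cv i) * X i) p) = eval (fun i => cv i * x i) p := by
  have e1 : ∀ (y : Fin n → ℂ) (q : MvPolynomial (Fin n) ℂ), aeval y q = eval y q := by
    intro y q
    rw [← coe_aeval_eq_eval]
    rfl
  rw [← e1, aeval_bind₁]
  simp only [map_mul, aeval_C, aeval_X, Algebra.algebraMap_self_apply]
  rw [e1]

private lemma mvUnit {n : ℕ} {p : MvPolynomial (Fin n) ℂ} (hp : IsUnit p) :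
    ∃ c : ℂ, c ≠ 0 ∧ p = C c := by
  induction n with
  | zero =>
    refine ⟨p.coeff 0, ?_, eq_C_of_isEmpty p⟩
    intro h0
    rw [eq_C_of_isEmpty p, h0, map_zero] at hp
    exact not_isUnit_zero hp
  | succ m ih =>
    have h1 : IsUnit (MvPolynomial.finSuccEquiv ℂ m p) := hp.map _
    obtain ⟨r, hr, hrp⟩ := Polynomial.isUnit_iff.1 h1
    obtain ⟨c, hc0, rfl⟩ := ih hr
    refine ⟨c, hc0, ?_⟩
    have h2 : p = (MvPolynomial.finSuccEquiv ℂ m).symm (Polynomial.C (C c)) := by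
      rw [hrp, AlgEquiv.symm_apply_apply]
    rw [h2]
    have h4 := RingHom.congr_fun (finSuccEquiv_comp_C_eq_C (R := ℂ) m) c
    simp only [RingHom.comp_apply] at h4
    exact h4

private lemma compS {n : ℕ} {G : Type} [Group G] (χ : Fin n → (G →* ℂˣ))
    (g h : G) (p : MvPolynomial (Fin n) ℂ) :
    bind₁ (fun i => C ((χ i h : ℂ)) * X i) (bind₁ (fun i => C ((χ i g : ℂ)) * X i) p) =
      bind₁ (fun i => C ((χ i (g * h) : ℂ)) * X i) p := by
  rw [bind₁_bind₁]
  have he : (fun i => (bind₁ fun i => C ((χ i h : ℂ)) * X i) (C ((χ i g : ℂ)) * X i))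
      = fun i => C ((χ i (g * h) : ℂ)) * X i := by
    funext i
    simp [map_mul, Units.val_mul, C_mul, mul_assoc]
  rw [he]

private lemma invS {n : ℕ} {G : Type} [Group G] (χ : Fin n → (G →* ℂˣ))
    (g : G) (p : MvPolynomial (Fin n) ℂ) :
    bind₁ (fun i => C ((χ i g⁻¹ : ℂ)) * X i) (bind₁ (fun i => C ((χ i g : ℂ)) * X i) p) = p := by
  rw [compS]
  have he : (fun i => C ((χ i (g * g⁻¹) : ℂ)) * X i)
      = fun i : Fin n => (X i : MvPolynomial (Fin n) ℂ) := by
    funext i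
    simp
  rw [he, bind₁_X_left, AlgHom.id_apply]

private lemma keyChar {n : ℕ} {G : Type} [Group G] [Finite G]
    (χ : Fin n → (G →* ℂˣ)) (f : MvPolynomial (Fin n) ℂ) (hf : Squarefree f)
    (hdvd : ∀ g : G, f ∣ bind₁ (fun i => C ((χ i g : ℂ)) * X i) f) :
    ∃ c : G →* ℂˣ, ∀ (g : G) (x : Fin n → ℂ),
      eval (fun i => (χ i g : ℂ) * x i) f = (c g : ℂ) * eval x f := by
  have hf0 : f ≠ 0 := hf.ne_zero
  have hkey : ∀ g : G, ∃ c : ℂ, c ≠ 0 ∧ ∀ x : Fin n → ℂ,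
      eval (fun i => (χ i g : ℂ) * x i) f = c * eval x f := by
    intro g
    obtain ⟨h, hh⟩ := hdvd g
    obtain ⟨h', hh'⟩ := hdvd g⁻¹
    have hfe : f * 1 = f * (h' * bind₁ (fun i => C ((χ i g⁻¹ : ℂ)) * X i) h) := by
      rw [mul_one]
      conv_lhs => rw [← invS χ g f, hh, map_mul, hh']
      ring
    have hone1 : (1 : MvPolynomial (Fin n) ℂ)
        = h' * bind₁ (fun i => C ((χ i g⁻¹ : ℂ)) * X i) h := mul_left_cancel₀ hf0 hfe
    have hu1 : IsUnit (bind₁ (fun i => C ((χ i g⁻¹ : ℂ)) * X i) h) :=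
      IsUnit.of_mul_eq_one h' (by rw [mul_comm]; exact hone1.symm)
    have hunit_h : IsUnit h := by
      have h2 : bind₁ (fun i => C ((χ i (g⁻¹)⁻¹ : ℂ)) * X i)
          (bind₁ (fun i => C ((χ i g⁻¹ : ℂ)) * X i) h) = h := invS χ g⁻¹ h
      rw [inv_inv] at h2
      rw [← h2]
      exact hu1.map _
    obtain ⟨c, hc0, rfl⟩ := mvUnit hunit_h
    refine ⟨c, hc0, fun x => ?_⟩
    have he := evalS (fun i => (χ i g : ℂ)) f x
    rw [hh, map_mul, eval_C] at he
    rw [← he]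
    ring
  choose cf hcf0 hcf using hkey
  obtain ⟨x0, hx0⟩ : ∃ x, eval x f ≠ 0 := by
    by_contra hcon
    push_neg at hcon
    exact hf0 (MvPolynomial.funext fun x => by rw [hcon x, map_zero])
  have hmul : ∀ g h : G, cf (g * h) = cf g * cf h := by
    intro g h
    have e1 : eval (fun i => (χ i (g * h) : ℂ) * x0 i) f = cf (g * h) * eval x0 f := hcf _ _
    have e2 : eval (fun i => (χ i (g * h) : ℂ) * x0 i) f = cf g * (cf h * eval x0 f) := by
      have he : (fun i => (χ i (g * h) : ℂ) * x0 i)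
          = fun i => (χ i g : ℂ) * ((χ i h : ℂ) * x0 i) := by
        funext i
        rw [map_mul]
        push_cast
        ring
      rw [he, hcf g, hcf h]
    have e3 : cf (g * h) * eval x0 f = cf g * (cf h * eval x0 f) := e1.symm.trans e2
    exact mul_right_cancel₀ hx0 (by rw [e3]; ring)
  have hone : cf 1 = 1 := by
    have e1 : eval (fun i => (χ i (1 : G) : ℂ) * x0 i) f = cf 1 * eval x0 f := hcf _ _
    have e2 : (fun i => (χ i (1 : G) : ℂ) * x0 i) = x0 := by
      funext i; simp
    rw [e2] at e1
    exact mul_right_cancel₀ hx0 (by rw [← e1, one_mul])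
  exact ⟨{ toFun := fun g => Units.mk0 (cf g) (hcf0 g),
           map_one' := by ext; simp [hone],
           map_mul' := fun g h => by ext; simp [hmul] }, fun g x => hcf g x⟩

open MvPolynomial in
/-- for a finite group `G` acting diagonally on `ℂⁿ` through
characters `χᵢ : G → ℂ*` and `f` a squarefree polynomial, the following are
equivalent: (1) the zero set of `f` is `G`-invariant; (2) there is a character
`χ : G → ℂ*` with `f(g·x) = χ(g) f(x)`; (3) some power `f^k` (`k ≥ 1`) is
`G`-invariant. -/
theorem stmt_14 (n : ℕ) (G : Type) [Group G] [Finite G]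
    (χ : Fin n → (G →* ℂˣ)) (f : MvPolynomial (Fin n) ℂ) (hf : Squarefree f)
    (act : G → (Fin n → ℂ) → (Fin n → ℂ))
    (hact : ∀ g x, act g x = fun i => (χ i g : ℂ) * x i) :
    ((∀ (P : Fin n → ℂ) (g : G), eval P f = 0 → eval (act g P) f = 0) ↔
      (∃ c : G →* ℂˣ, ∀ (g : G) (x : Fin n → ℂ),
        eval (act g x) f = (c g : ℂ) * eval x f)) ∧
    ((∃ c : G →* ℂˣ, ∀ (g : G) (x : Fin n → ℂ),
        eval (act g x) f = (c g : ℂ) * eval x f) ↔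
      (∃ k : ℕ, 1 ≤ k ∧ ∀ (g : G) (x : Fin n → ℂ),
        eval (act g x) f ^ k = eval x f ^ k)) := by
  have hrad : IsRadical f := hf.isRadical
  constructor
  · constructor
    · intro h1
      have hdvd : ∀ g : G, f ∣ bind₁ (fun i => C ((χ i g : ℂ)) * X i) f := by
        intro g
        have hmem : bind₁ (fun i => C ((χ i g : ℂ)) * X i) f ∈
            vanishingIdeal ℂ (zeroLocus ℂ (Ideal.span {f})) := by
          rw [mem_vanishingIdeal_iff]
          intro x hx
          rw [mem_zeroLocus_iff] at hx
          have hfx : eval x f = 0 := hx f (Ideal.mem_span_singleton_self f)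
          have h2 := h1 x g hfx
          rw [hact] at h2
          change eval x _ = 0; rw [evalS]
          exact h2
        rw [vanishingIdeal_zeroLocus_eq_radical] at hmem
        obtain ⟨m, hm⟩ := hmem
        rw [Ideal.mem_span_singleton] at hm
        exact hrad m _ hm
      obtain ⟨c, hc⟩ := keyChar χ f hf hdvd
      exact ⟨c, fun g x => by rw [hact]; exact hc g x⟩
    · rintro ⟨c, hc⟩ P g hP
      rw [hc g P, hP, mul_zero]
  · constructor
    · rintro ⟨c, hc⟩
      refine ⟨Nat.card G, Nat.one_le_iff_ne_zero.2 Nat.card_pos.ne', fun g x => ?_⟩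
      rw [hc g x, mul_pow]
      have hu : (c g) ^ Nat.card G = 1 := by rw [← map_pow, pow_card_eq_one', map_one]
      have hv : ((c g : ℂ)) ^ Nat.card G = 1 := by
        rw [← Units.val_pow_eq_pow_val, hu, Units.val_one]
      rw [hv, one_mul]
    · rintro ⟨k, hk, hp⟩
      have hdvd : ∀ g : G, f ∣ bind₁ (fun i => C ((χ i g : ℂ)) * X i) f := by
        intro g
        have hpoly : (bind₁ (fun i => C ((χ i g : ℂ)) * X i) f) ^ k = f ^ k := by
          apply MvPolynomial.funext
          intro x
          rw [map_pow, map_pow, evalS]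
          have h2 := hp g x
          rw [hact] at h2
          exact h2
        exact hrad k _ (hpoly ▸ dvd_pow_self f (by omega))
      obtain ⟨c, hc⟩ := keyChar χ f hf hdvd
      exact ⟨c, fun g x => by rw [hact]; exact hc g x⟩
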